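/- For every v ∈ B_m (a normalized nonzero sign vector), ⟨v, u⟩ ≤ 1, where u_i = √i − √(i−1). Moreover equality holds if and only if v = v_k for some k ∈ {1, …, m}. -/

import Mathlib

open scoped RealInnerProductSpace BigOperators
noncomputable section

def A (m : ℕ) : Set (EuclideanSpace ℝ (Fin m)) :=
  {v | (∀ i, v i = -1 ∨ v i = 0 ∨ v i = 1) ∧ v ≠ 0}

def B (m : ℕ) : Set (EuclideanSpace ℝ (Fin m)) :=
  (fun v => ‖v‖⁻¹ • v) '' A m

def vk (m : ℕ) (k : Fin m) : EuclideanSpace ℝ (Fin m) :=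
  WithLp.toLp 2 (fun i => if i ≤ k then (Real.sqrt ((k : ℕ) + 1))⁻¹ else 0)

def u (m : ℕ) : EuclideanSpace ℝ (Fin m) :=
  WithLp.toLp 2 (fun i => Real.sqrt ((i : ℕ) + 1) - Real.sqrt (i : ℕ))

private lemma inv_form (k : ℕ) : Real.sqrt (k+1) - Real.sqrt k = (Real.sqrt (k+1) + Real.sqrt k)⁻¹ := by
  have h1 : (0:ℝ) ≤ k := by positivity
  have h2 : (0:ℝ) ≤ (k:ℝ)+1 := by positivity
  have hs1 := Real.sq_sqrt h1
  have hs2 := Real.sq_sqrt h2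
  have hpos : 0 < Real.sqrt (k+1) + Real.sqrt k := by
    have : 0 < Real.sqrt ((k:ℝ)+1) := Real.sqrt_pos.mpr (by linarith)
    have := Real.sqrt_nonneg (k:ℝ)
    linarith
  have key : (Real.sqrt (k+1) - Real.sqrt k) * (Real.sqrt (k+1) + Real.sqrt k) = 1 := by
    nlinarith [hs1, hs2]
  field_simp
  nlinarith [hs1, hs2]

lemma u_anti {a b : ℕ} (h : a ≤ b) :
    Real.sqrt (b+1) - Real.sqrt b ≤ Real.sqrt (a+1) - Real.sqrt a := by
  rw [inv_form, inv_form]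
  apply inv_anti₀
  · have : 0 < Real.sqrt ((a:ℝ)+1) := Real.sqrt_pos.mpr (by positivity)
    have := Real.sqrt_nonneg (a:ℝ); linarith
  · have h1 : Real.sqrt ((a:ℝ)+1) ≤ Real.sqrt ((b:ℝ)+1) := Real.sqrt_le_sqrt (by exact_mod_cast by linarith)
    have h2 : Real.sqrt (a:ℝ) ≤ Real.sqrt (b:ℝ) := Real.sqrt_le_sqrt (by exact_mod_cast h)
    linarith

lemma u_strict {a b : ℕ} (h : a < b) :
    Real.sqrt (b+1) - Real.sqrt b < Real.sqrt (a+1) - Real.sqrt a := by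
  rw [inv_form, inv_form]
  apply inv_strictAnti₀
  · have : 0 < Real.sqrt ((a:ℝ)+1) := Real.sqrt_pos.mpr (by positivity)
    have := Real.sqrt_nonneg (a:ℝ); linarith
  · have h1 : Real.sqrt ((a:ℝ)+1) < Real.sqrt ((b:ℝ)+1) := by
      apply Real.sqrt_lt_sqrt (by positivity); exact_mod_cast by omega
    have h2 : Real.sqrt (a:ℝ) ≤ Real.sqrt (b:ℝ) := Real.sqrt_le_sqrt (by exact_mod_cast h.le)
    linarith

lemma telescope (n : ℕ) : ∑ i ∈ Finset.range n, (Real.sqrt (i+1) - Real.sqrt i) = Real.sqrt n := by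
  have := Finset.sum_range_sub (fun i : ℕ => Real.sqrt i) n
  simpa using this

lemma key (S : Finset ℕ) :
    (∑ i ∈ S, (Real.sqrt (i+1) - Real.sqrt i) ≤ Real.sqrt S.card) ∧
    ((∑ i ∈ S, (Real.sqrt (i+1) - Real.sqrt i) = Real.sqrt S.card) ↔ S = Finset.range S.card) := by
  induction S using Finset.strongInduction with
  | _ S ih =>
    rcases S.eq_empty_or_nonempty with rfl | hne
    · simp
    · have hMS : S.max' hne ∈ S := S.max'_mem hne
      set M := S.max' hne with hMdef
      set S' := S.erase M with hS'
      have hcard : S'.card + 1 = S.card := Finset.card_erase_add_one hMS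
      have hsub : S' ⊂ S := Finset.erase_ssubset hMS
      obtain ⟨ih1, ih2⟩ := ih S' hsub
      have hM : S'.card ≤ M := by
        have hsubr : S ⊆ Finset.range (M+1) := by
          intro i hi
          simp only [Finset.mem_range]
          exact Nat.lt_succ_of_le (S.le_max' i hi)
        have := Finset.card_le_card hsubr
        simp only [Finset.card_range] at this
        omega
      have hsum : ∑ i ∈ S', (Real.sqrt (i+1) - Real.sqrt i) + (Real.sqrt (M+1) - Real.sqrt M)
          = ∑ i ∈ S, (Real.sqrt (i+1) - Real.sqrt i) := Finset.sum_erase_add S _ hMS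
      have hu : Real.sqrt (M+1) - Real.sqrt M ≤ Real.sqrt (S'.card+1) - Real.sqrt S'.card :=
        u_anti hM
      have hcards : (S.card : ℝ) = (S'.card : ℝ) + 1 := by exact_mod_cast hcard.symm
      constructor
      · rw [← hsum]
        calc ∑ i ∈ S', (Real.sqrt (i+1) - Real.sqrt i) + (Real.sqrt (M+1) - Real.sqrt M)
            ≤ Real.sqrt S'.card + (Real.sqrt (S'.card+1) - Real.sqrt S'.card) := by
              linarith
          _ = Real.sqrt S.card := by rw [hcards]; ring
      · constructor
        · intro heq
          have h1 : ∑ i ∈ S', (Real.sqrt (i+1) - Real.sqrt i) = Real.sqrt S'.card ∧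
              M = S'.card := by
            by_contra hcon
            have hlt : ∑ i ∈ S', (Real.sqrt (i+1) - Real.sqrt i) + (Real.sqrt (M+1) - Real.sqrt M)
                < Real.sqrt S'.card + (Real.sqrt (S'.card+1) - Real.sqrt S'.card) := by
              rcases eq_or_lt_of_le ih1 with hE | hL
              · rcases eq_or_lt_of_le hM with hE2 | hL2
                · exact absurd ⟨hE, hE2.symm⟩ hcon
                · have := u_strict hL2
                  linarith
              · linarith
            rw [hsum] at hlt
            rw [heq, hcards] at hlt
            linarith
          obtain ⟨hA, hB⟩ := h1
          have hS'eq : S' = Finset.range S'.card := ih2.mp hA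
          have : S = insert M S' := (Finset.insert_erase hMS).symm
          rw [this, hS'eq, hB]
          rw [Finset.card_insert_of_notMem (by simp), Finset.card_range, ← Finset.range_add_one]
        · intro heq
          rw [heq, Finset.card_range, telescope]

lemma upos (m : ℕ) (i : Fin m) : 0 < u m i := by
  have : Real.sqrt (i:ℕ) < Real.sqrt ((i:ℕ)+1) :=
    Real.sqrt_lt_sqrt (by positivity) (by linarith)
  simpa [u] using sub_pos.mpr this

lemma vk_inner (m : ℕ) (k : Fin m) : ⟪vk m k, u m⟫ = 1 := by
  have hc : (0:ℝ) < Real.sqrt ((k:ℕ)+1) := Real.sqrt_pos.mpr (by positivity)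
  have h1 : ⟪vk m k, u m⟫ = ∑ i : Fin m, vk m k i * u m i := by
    simp [PiLp.inner_apply, RCLike.inner_apply, vk, mul_comm]
  rw [h1]
  have h2 : ∀ i : Fin m, vk m k i * u m i =
      (fun j : ℕ => if j ≤ (k:ℕ) then (Real.sqrt ((k:ℕ)+1))⁻¹ * (Real.sqrt (j+1) - Real.sqrt j) else 0) (i:ℕ) := by
    intro i
    simp only [vk, u, PiLp.toLp_apply, Fin.le_def]
    by_cases h : (i:ℕ) ≤ (k:ℕ) <;> simp [h]
  have h2' : ∑ i : Fin m, vk m k i * u m i = ∑ j ∈ Finset.range m,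
      (if j ≤ (k:ℕ) then (Real.sqrt ((k:ℕ)+1))⁻¹ * (Real.sqrt (j+1) - Real.sqrt j) else 0) := by
    rw [← Fin.sum_univ_eq_sum_range]
    exact Finset.sum_congr rfl (fun i _ => h2 i)
  rw [h2']
  have h3 : ∑ j ∈ Finset.range m, (if j ≤ (k:ℕ) then (Real.sqrt ((k:ℕ)+1))⁻¹ * (Real.sqrt (j+1) - Real.sqrt j) else 0)
      = ∑ j ∈ Finset.range ((k:ℕ)+1), (Real.sqrt ((k:ℕ)+1))⁻¹ * (Real.sqrt (j+1) - Real.sqrt j) := by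
    rw [← Finset.sum_filter]
    congr 1
    ext j
    simp only [Finset.mem_filter, Finset.mem_range]
    have := k.isLt
    omega
  rw [h3, ← Finset.mul_sum, telescope]
  push_cast
  exact inv_mul_cancel₀ (ne_of_gt hc)

theorem stmt2 (m : ℕ) (hm : 2 ≤ m) (v : EuclideanSpace ℝ (Fin m)) (hv : v ∈ B m) :
    ⟪v, u m⟫ ≤ 1 ∧ (⟪v, u m⟫ = 1 ↔ ∃ k : Fin m, v = vk m k) := by
  classical
  obtain ⟨w, ⟨hw01, hw0⟩, hveq'⟩ := hv
  have hveq : ‖w‖⁻¹ • w = v := hveq'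
  clear hveq'
  set Sf : Finset (Fin m) := Finset.univ.filter (fun i => w i ≠ 0) with hSf
  have hmem : ∀ i, i ∈ Sf ↔ w i ≠ 0 := by intro i; simp [hSf]
  have hne : Sf.Nonempty := by
    rcases Function.ne_iff.mp (show w.ofLp ≠ (0 : EuclideanSpace ℝ (Fin m)).ofLp from fun h => hw0 (WithLp.ofLp_injective 2 h)) with ⟨i, hi⟩
    exact ⟨i, (hmem i).mpr (by simpa using hi)⟩
  set s := Sf.card with hs
  have hs1 : 1 ≤ s := Finset.card_pos.mpr hne
  have hsm : s ≤ m := by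
    have h := Finset.card_le_card (Finset.filter_subset (fun i => w i ≠ 0) (Finset.univ : Finset (Fin m)))
    simpa [hs, hSf] using h
  have hsq : ∀ i ∈ Sf, (w i)^2 = 1 := by
    intro i hi
    rcases hw01 i with h | h | h
    · rw [h]; ring
    · exact absurd h ((hmem i).mp hi)
    · rw [h]; ring
  have hnorm : ‖w‖ = Real.sqrt s := by
    rw [EuclideanSpace.norm_eq]
    congr 1
    have : ∑ i : Fin m, ‖w i‖^2 = ∑ i ∈ Sf, ‖w i‖^2 := by
      refine (Finset.sum_subset (Finset.subset_univ _) ?_).symm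
      intro i _ hi
      have : w i = 0 := by by_contra h; exact hi ((hmem i).mpr h)
      simp [this]
    rw [this]
    rw [Finset.sum_congr rfl (fun i hi => by rw [Real.norm_eq_abs, sq_abs, hsq i hi])]
    simp [hs]
  have hspos : (0:ℝ) < Real.sqrt s := Real.sqrt_pos.mpr (by positivity)
  have hinner : ⟪v, u m⟫ = (Real.sqrt s)⁻¹ * ∑ i ∈ Sf, w i * u m i := by
    rw [← hveq, real_inner_smul_left, hnorm]
    congr 1
    rw [PiLp.inner_apply]
    simp only [RCLike.inner_apply, conj_trivial, mul_comm ((u m).ofLp _)]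
    refine (Finset.sum_subset (Finset.subset_univ _) ?_).symm
    intro i _ hi
    have : w i = 0 := by by_contra h; exact hi ((hmem i).mpr h)
    simp [this]
  have hterm : ∀ i ∈ Sf, w i * u m i ≤ u m i := by
    intro i hi
    have h1 : w i ≤ 1 := by rcases hw01 i with h | h | h <;> rw [h] <;> norm_num
    nlinarith [upos m i]
  have hT' : ∑ i ∈ Sf, u m i = ∑ j ∈ Sf.image Fin.val, (Real.sqrt (j+1) - Real.sqrt j) := by
    rw [Finset.sum_image (fun a _ b _ h => Fin.val_injective h)]
    rfl
  have hcardim : (Sf.image Fin.val).card = s := Finset.card_image_of_injective _ Fin.val_injective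
  obtain ⟨hk1, hk2⟩ := key (Sf.image Fin.val)
  rw [hcardim] at hk1 hk2
  have hsum_le : ∑ i ∈ Sf, u m i ≤ Real.sqrt s := by rw [hT']; exact hk1
  have hwu_le : ∑ i ∈ Sf, w i * u m i ≤ ∑ i ∈ Sf, u m i := Finset.sum_le_sum hterm
  constructor
  · rw [hinner]
    calc (Real.sqrt s)⁻¹ * ∑ i ∈ Sf, w i * u m i
        ≤ (Real.sqrt s)⁻¹ * Real.sqrt s := by
          apply mul_le_mul_of_nonneg_left (le_trans hwu_le hsum_le) (by positivity)
      _ = 1 := inv_mul_cancel₀ (ne_of_gt hspos)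
  · constructor
    · intro heq
      have hTeq : ∑ i ∈ Sf, w i * u m i = Real.sqrt s := by
        rw [hinner] at heq
        field_simp at heq
        linarith
      have hE1 : ∑ i ∈ Sf, w i * u m i = ∑ i ∈ Sf, u m i := le_antisymm hwu_le (by linarith [hsum_le])
      have hE2 : ∑ i ∈ Sf, u m i = Real.sqrt s := le_antisymm hsum_le (by linarith)
      have hrange : Sf.image Fin.val = Finset.range s := by
        apply hk2.mp
        rw [← hT']; exact hE2
      have hw1 : ∀ i ∈ Sf, w i = 1 := by
        intro i hi
        have := (Finset.sum_eq_sum_iff_of_le hterm).mp hE1 i hi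
        have hu := upos m i
        nlinarith
      have hmem2 : ∀ i : Fin m, i ∈ Sf ↔ (i : ℕ) < s := by
        intro i
        constructor
        · intro hi
          have : (i:ℕ) ∈ Sf.image Fin.val := Finset.mem_image_of_mem _ hi
          rw [hrange] at this
          simpa using this
        · intro hi
          have : (i:ℕ) ∈ Finset.range s := Finset.mem_range.mpr hi
          rw [← hrange] at this
          obtain ⟨j, hj, hji⟩ := Finset.mem_image.mp this
          rwa [Fin.val_injective hji] at hj
      refine ⟨⟨s - 1, by omega⟩, ?_⟩
      rw [← hveq]
      ext i
      have hvi : (‖w‖⁻¹ • w) i = (Real.sqrt s)⁻¹ * w i := by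
        rw [hnorm]; rfl
      rw [hvi]
      have hcast : ((s - 1 : ℕ) : ℝ) + 1 = (s : ℝ) := by
        push_cast [Nat.cast_sub hs1]; ring
      by_cases h : (i:ℕ) < s
      · have hi : i ∈ Sf := (hmem2 i).mpr h
        rw [hw1 i hi, mul_one]
        have hle : i ≤ (⟨s - 1, by omega⟩ : Fin m) := by
          rw [Fin.le_def]; simp; omega
        simp only [vk, PiLp.toLp_apply, hle, if_true]
        rw [hcast]
      · have hni : i ∉ Sf := fun hi => h ((hmem2 i).mp hi)
        have hwi : w i = 0 := by by_contra hc; exact hni ((hmem i).mpr hc)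
        rw [hwi, mul_zero]
        have hnle : ¬ i ≤ (⟨s - 1, by omega⟩ : Fin m) := by
          rw [Fin.le_def]; simp; omega
        simp [vk, hnle]
    · rintro ⟨k, rfl⟩
      exact vk_inner m k
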